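/- Let T be a finitely cyclic bounded operator on a complex Hilbert space whose point spectrum is empty. Then the approximate point spectrum of T equals the essential spectrum of T. -/

import Mathlib

open ContinuousLinearMap

variable {H : Type*} [NormedAddCommGroup H] [InnerProductSpace ℂ H] [CompleteSpace H]

/-- An operator is Fredholm if its kernel is finite dimensional, its range is closed,
and its range has finite codimension. -/
def IsFredholmOp (A : H →L[ℂ] H) : Prop :=
  FiniteDimensional ℂ (LinearMap.ker (A : H →ₗ[ℂ] H)) ∧
    IsClosed (Set.range A) ∧
    FiniteDimensional ℂ (H ⧸ LinearMap.range (A : H →ₗ[ℂ] H))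

/-- The approximate point spectrum: the set of `w` such that `T - w` is not bounded below. -/
def approxPointSpectrum (T : H →L[ℂ] H) : Set ℂ :=
  {w : ℂ | ¬ ∃ c : ℝ, 0 < c ∧ ∀ x : H, c * ‖x‖ ≤ ‖(T - w • (1 : H →L[ℂ] H)) x‖}

/-- The essential spectrum: the set of `w` such that `T - w` is not Fredholm. -/
def essentialSpectrum (T : H →L[ℂ] H) : Set ℂ :=
  {w : ℂ | ¬ IsFredholmOp (T - w • (1 : H →L[ℂ] H))}

/-- `T` is finitely cyclic: finitely many vectors whose orbit under `T` spans densely. -/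
def FinitelyCyclic (T : H →L[ℂ] H) : Prop :=
  ∃ (m : ℕ) (h : Fin m → H),
    (Submodule.span ℂ {x : H | ∃ (k : ℕ) (i : Fin m), x = (T ^ k) (h i)}).topologicalClosure = ⊤

private lemma aux_fredholm_to_bound (A : H →L[ℂ] H) (hker : LinearMap.ker (A : H →ₗ[ℂ] H) = ⊥)
    (hcl : IsClosed (Set.range A)) :
    ∃ c : ℝ, 0 < c ∧ ∀ x : H, c * ‖x‖ ≤ ‖A x‖ := by
  set R := LinearMap.range ((A : H →ₗ[ℂ] H)) with hR
  have hKc : IsClosed (R : Set H) := by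
    rw [hR, LinearMap.coe_range, ContinuousLinearMap.coe_coe]; exact hcl
  haveI : CompleteSpace R := hKc.completeSpace_coe
  let B : H →L[ℂ] R := A.codRestrict R (fun x => LinearMap.mem_range_self _ x)
  have hkerB : LinearMap.ker (B : H →ₗ[ℂ] R) = ⊥ := by
    rw [ContinuousLinearMap.ker_codRestrict]
    rw [← hker]
  have hrangeB : LinearMap.range (B : H →ₗ[ℂ] R) = ⊤ := by
    rw [eq_top_iff]
    rintro ⟨z, hz⟩ -
    obtain ⟨x, rfl⟩ := hz
    exact ⟨x, rfl⟩
  let e := ContinuousLinearEquiv.ofBijective B hkerB hrangeB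
  set C := ‖(e.symm : R →L[ℂ] H)‖ with hC
  refine ⟨(C + 1)⁻¹, by positivity, fun x => ?_⟩
  have h1 : ‖x‖ ≤ C * ‖A x‖ := by
    have h2 : x = e.symm (e x) := (e.symm_apply_apply x).symm
    calc ‖x‖ = ‖(e.symm : R →L[ℂ] H) (e x)‖ := by rw [ContinuousLinearEquiv.coe_coe, ← h2]
      _ ≤ C * ‖e x‖ := (e.symm : R →L[ℂ] H).le_opNorm _
      _ = C * ‖A x‖ := by
          have h3 : ((e x : R) : H) = A x := by
            simp [e, ContinuousLinearEquiv.coeFn_ofBijective, B]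
          have h4 : ‖e x‖ = ‖A x‖ := by rw [← h3]; rfl
          rw [h4]
  have hC0 : 0 ≤ C := norm_nonneg _
  have hAx : 0 ≤ ‖A x‖ := norm_nonneg _
  rw [inv_mul_le_iff₀ (by positivity)]
  nlinarith

private lemma aux_bound_to_fredholm (T : H →L[ℂ] H) (w : ℂ) (m : ℕ) (h : Fin m → H)
    (hspan : (Submodule.span ℂ {x : H | ∃ (k : ℕ) (i : Fin m), x = (T ^ k) (h i)}).topologicalClosure = ⊤)
    (c : ℝ) (hc : 0 < c)
    (hbd : ∀ x : H, c * ‖x‖ ≤ ‖(T - w • (1 : H →L[ℂ] H)) x‖)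
    (hker : LinearMap.ker ((T - w • (1 : H →L[ℂ] H)) : H →ₗ[ℂ] H) = ⊥) :
    FiniteDimensional ℂ (LinearMap.ker ((T - w • (1 : H →L[ℂ] H)) : H →ₗ[ℂ] H)) ∧
      IsClosed (Set.range (T - w • (1 : H →L[ℂ] H))) ∧
      FiniteDimensional ℂ (H ⧸ LinearMap.range ((T - w • (1 : H →L[ℂ] H)) : H →ₗ[ℂ] H)) := by
  set A : H →L[ℂ] H := T - w • (1 : H →L[ℂ] H) with hA
  have hAapp : ∀ z : H, A z = T z - w • z := by intro z; simp [hA]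
  -- antilipschitz, closed range
  have hbd' : ∀ x : H, ‖x‖ ≤ (Real.toNNReal c⁻¹ : NNReal) * ‖A x‖ := by
    intro x
    rw [Real.coe_toNNReal _ (le_of_lt (inv_pos.2 hc)), le_inv_mul_iff₀ hc]
    exact hbd x
  have hanti := A.antilipschitz_of_bound hbd'
  have hcl : IsClosed (Set.range A) := hanti.isClosed_range A.uniformContinuous
  refine ⟨by rw [hker]; infer_instance, hcl, ?_⟩
  set R := LinearMap.range ((A : H →ₗ[ℂ] H)) with hR
  have hRc : IsClosed (R : Set H) := by
    rw [hR, LinearMap.coe_range, ContinuousLinearMap.coe_coe]; exact hcl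
  set W := Submodule.span ℂ (Set.range h) with hW
  haveI hfinW : FiniteDimensional ℂ W := FiniteDimensional.span_of_finite ℂ (Set.finite_range h)
  -- key algebraic identity
  have key : ∀ (k : ℕ) (x : H), ∃ y, (T ^ k) x = w ^ k • x + A y := by
    intro k
    induction k with
    | zero => intro x; exact ⟨0, by simp⟩
    | succ k ih =>
      intro x
      obtain ⟨y, hy⟩ := ih x
      refine ⟨w ^ k • x + T y, ?_⟩
      have : (T ^ (k + 1)) x = T ((T ^ k) x) := by
        rw [pow_succ']; rfl
      rw [this, hy]
      simp only [map_add, map_smul, hAapp, pow_succ]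
      simp only [map_sub, map_smul]
      module
  -- spanning set sits in R ⊔ W
  have hsub : {x : H | ∃ (k : ℕ) (i : Fin m), x = (T ^ k) (h i)} ⊆ ↑(R ⊔ W) := by
    rintro x ⟨k, i, rfl⟩
    obtain ⟨y, hy⟩ := key k (h i)
    rw [hy]
    exact Submodule.add_mem _
      (Submodule.mem_sup_right (Submodule.smul_mem _ _ (Submodule.subset_span ⟨i, rfl⟩)))
      (Submodule.mem_sup_left ⟨y, by simp⟩)
  -- R ⊔ W is closed
  haveI := hRc
  have hπcont : Continuous R.mkQ := by
    exact (LinearMap.mkContinuous R.mkQ 1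
      (fun x => by simpa using Submodule.Quotient.norm_mk_le R x)).continuous.congr
      (fun x => rfl)
  haveI : FiniteDimensional ℂ (Submodule.map R.mkQ W) := Module.Finite.map _ _
  have hclsup : IsClosed ((R ⊔ W : Submodule ℂ H) : Set H) := by
    have heq : R ⊔ W = Submodule.comap R.mkQ (Submodule.map R.mkQ W) := by
      rw [Submodule.comap_map_eq, Submodule.ker_mkQ, sup_comm]
    rw [heq]
    exact (Submodule.closed_of_finiteDimensional (Submodule.map R.mkQ W)).preimage hπcont
  have htop : R ⊔ W = ⊤ := by
    refine le_antisymm le_top ?_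
    rw [← hspan]
    exact Submodule.topologicalClosure_minimal _ (Submodule.span_le.mpr hsub) hclsup
  -- quotient is finite dimensional
  have hsurj : Function.Surjective (R.mkQ.comp W.subtype) := by
    intro z
    obtain ⟨x, rfl⟩ := R.mkQ_surjective z
    have hx : x ∈ R ⊔ W := htop ▸ Submodule.mem_top
    obtain ⟨r, hr, v, hv, rfl⟩ := Submodule.mem_sup.mp hx
    refine ⟨⟨v, hv⟩, ?_⟩
    have : R.mkQ r = 0 := by
      rw [Submodule.mkQ_apply, Submodule.Quotient.mk_eq_zero]; exact hr
    simp [LinearMap.comp_apply, map_add, this]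
  exact Module.Finite.of_surjective (R.mkQ.comp W.subtype) hsurj

/-- a finitely cyclic bounded operator with empty point spectrum has
approximate point spectrum equal to essential spectrum. -/
theorem approxPointSpectrum_eq_essentialSpectrum_of_finitelyCyclic
    (T : H →L[ℂ] H) (hcyc : FinitelyCyclic T)
    (hp : ∀ w : ℂ, LinearMap.ker ((T - w • (1 : H →L[ℂ] H)) : H →ₗ[ℂ] H) = ⊥) :
    approxPointSpectrum T = essentialSpectrum T := by
  ext w
  simp only [approxPointSpectrum, essentialSpectrum, Set.mem_setOf_eq]
  apply not_congr
  constructor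
  · rintro ⟨c, hc, hbd⟩
    obtain ⟨m, h, hspan⟩ := hcyc
    exact aux_bound_to_fredholm T w m h hspan c hc hbd (hp w)
  · rintro ⟨-, hcl, -⟩
    exact aux_fredholm_to_bound _ (hp w) hcl
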